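/- Let q be a real number with q > 2. There exists a constant C > 0, depending only on q, such that for all real numbers a, b one has | |a+b|^q - |a|^q - q·|a|^{q-2}·a·b | ≤ C·( |a|^{q-2}·b² + |b|^q ). -/

import Mathlib

lemma sq_rpow_half (r x : ℝ) : (x^2 : ℝ) ^ (r/2) = |x| ^ r := by
  rw [← sq_abs x, ← Real.rpow_natCast |x| 2, ← Real.rpow_mul (abs_nonneg x)]
  norm_num
  rw [mul_div_cancel₀]
  norm_num

lemma hG (q : ℝ) (hq : 2 < q) (t : ℝ) :
    HasDerivAt (fun x : ℝ => |x| ^ (q-2) * x) ((q-1) * |t| ^ (q-2)) t := by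
  rcases eq_or_ne t 0 with rfl | ht
  · have h0 : (q-1) * |(0:ℝ)| ^ (q-2) = 0 := by
      rw [abs_zero, Real.zero_rpow (by linarith), mul_zero]
    rw [h0, hasDerivAt_iff_tendsto_slope]
    have hc : ContinuousAt (fun h : ℝ => |h| ^ (q-2)) 0 := by
      exact (Real.continuousAt_rpow_const _ _ (Or.inr (by linarith))).comp continuous_abs.continuousAt
    have := hc.tendsto
    rw [show |(0:ℝ)| ^ (q-2) = 0 by rw [abs_zero, Real.zero_rpow (by linarith)]] at this
    refine (this.mono_left nhdsWithin_le_nhds).congr' ?_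
    filter_upwards [self_mem_nhdsWithin] with h hh
    simp only [slope_def_field, Set.mem_compl_iff, Set.mem_singleton_iff] at *
    field_simp
    simp
  · have h1 : HasDerivAt (fun x : ℝ => (x^2) ^ ((q-2)/2)) (2*t^1 * ((q-2)/2) * (t^2) ^ ((q-2)/2 - 1)) t :=
      (hasDerivAt_pow 2 t).rpow_const (Or.inl (pow_ne_zero _ ht))
    have h2 := h1.mul (hasDerivAt_id t)
    have heq : (fun x : ℝ => (x^2) ^ ((q-2)/2) * x) = fun x : ℝ => |x| ^ (q-2) * x := by
      funext x; rw [sq_rpow_half]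
    simp only [id_eq] at h2
    rw [show ((fun x : ℝ => (x^2) ^ ((q-2)/2)) * id) = fun x : ℝ => (x^2) ^ ((q-2)/2) * x from rfl, heq] at h2
    refine h2.congr_deriv ?_
    have hts : (t^2 : ℝ) ^ ((q-2)/2 - 1) = |t| ^ (q-4) := by
      rw [show (q-2)/2 - 1 = (q-4)/2 by ring, sq_rpow_half]
    rw [hts, sq_rpow_half]
    have habs : (0:ℝ) < |t| := abs_pos.mpr ht
    have : |t| ^ (q-4) * t^2 = |t| ^ (q-2) := by
      rw [← sq_abs, ← Real.rpow_natCast |t| 2, ← Real.rpow_add habs]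
      norm_num
      congr 1
      ring
    nlinarith [this]

lemma hF' (q : ℝ) (hq : 2 < q) (t : ℝ) :
    HasDerivAt (fun x : ℝ => |x| ^ q) (q * (|t| ^ (q-2) * t)) t := by
  have h1 : HasDerivAt (fun x : ℝ => (x^2) ^ (q/2)) (2*t^1 * (q/2) * (t^2) ^ (q/2 - 1)) t :=
    (hasDerivAt_pow 2 t).rpow_const (Or.inr (by linarith))
  have heq : (fun x : ℝ => (x^2) ^ (q/2)) = fun x : ℝ => |x| ^ q := by
    funext x; rw [sq_rpow_half]
  rw [heq] at h1
  convert h1 using 1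
  rw [show q/2 - 1 = (q-2)/2 by ring, sq_rpow_half]
  ring

/-- Inequality (2.20) of Lemma 2.2 of the paper: for `q > 2` there is `C > 0`,
depending only on `q`, with
`||a+b|^q - |a|^q - q·|a|^(q-2)·a·b| ≤ C·(|a|^(q-2)·b² + |b|^q)` for all reals. -/
theorem stmt_2 (q : ℝ) (hq : 2 < q) :
    ∃ C : ℝ, 0 < C ∧
      ∀ a b : ℝ,
        |(|a + b| ^ q - |a| ^ q - q * |a| ^ (q - 2) * a * b)| ≤
          C * (|a| ^ (q - 2) * b ^ 2 + |b| ^ q) := by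
  have h2 : (0:ℝ) < 2 ^ (q-2) := Real.rpow_pos_of_pos two_pos _
  refine ⟨q * (q-1) * 2 ^ (q-2), mul_pos (mul_pos (by linarith) (by linarith)) h2, fun a b => ?_⟩
  set G : ℝ → ℝ := fun x => |x| ^ (q-2) * x with hGdef
  set M : ℝ := |a| + |b| with hM
  have hM0 : 0 ≤ M := by positivity
  -- Step A: Lipschitz bound for G on the relevant interval
  have stepA : ∀ t ∈ Set.uIcc (0:ℝ) b, |G (a + t) - G a| ≤ (q-1) * M ^ (q-2) * |b| := by
    intro t ht
    have htb : |t| ≤ |b| := by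
      have hb1 := le_abs_self b
      have hb2 := neg_abs_le b
      rcases Set.mem_uIcc.mp ht with ⟨h1, h2⟩ | ⟨h1, h2⟩ <;> rw [abs_le] <;>
        exact ⟨by linarith, by linarith⟩
    have key : ‖G (a + t) - G a‖ ≤ (q-1) * M ^ (q-2) * ‖(a + t) - a‖ := by
      apply Convex.norm_image_sub_le_of_norm_hasDerivWithin_le
        (f' := fun x => (q-1) * |x| ^ (q-2)) (s := Set.Icc (a - |b|) (a + |b|))
      · exact fun x _ => (hG q hq x).hasDerivWithinAt
      · intro x hx
        have hxM : |x| ≤ M := by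
          rw [abs_le]
          constructor
          · have := neg_abs_le a; simp only [hM]; linarith [hx.1]
          · have := le_abs_self a; simp only [hM]; linarith [hx.2]
        rw [Real.norm_eq_abs, abs_mul, abs_of_nonneg (by linarith : (0:ℝ) ≤ q - 1),
          abs_of_nonneg (Real.rpow_nonneg (abs_nonneg x) _)]
        exact mul_le_mul_of_nonneg_left
          (Real.rpow_le_rpow (abs_nonneg x) hxM (by linarith)) (by linarith)
      · exact convex_Icc _ _
      · constructor <;> [linarith [abs_nonneg b]; linarith [abs_nonneg b]]
      · constructor <;> [linarith [neg_abs_le t, htb]; linarith [le_abs_self t, htb]]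
    rw [Real.norm_eq_abs, Real.norm_eq_abs, add_sub_cancel_left] at key
    calc |G (a + t) - G a| ≤ (q-1) * M ^ (q-2) * |t| := key
      _ ≤ (q-1) * M ^ (q-2) * |b| := by
          apply mul_le_mul_of_nonneg_left htb
          have := Real.rpow_nonneg hM0 (q-2)
          nlinarith
  -- Step B: mean value for F
  have stepB : |(|a + b| ^ q - |a| ^ q - q * |a| ^ (q - 2) * a * b)| ≤
      q * ((q-1) * M ^ (q-2) * |b|) * |b| := by
    have key : ‖(fun t : ℝ => |a + t| ^ q - q * (|a| ^ (q-2) * a) * t) b -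
        (fun t : ℝ => |a + t| ^ q - q * (|a| ^ (q-2) * a) * t) 0‖ ≤
        q * ((q-1) * M ^ (q-2) * |b|) * ‖b - 0‖ := by
      apply Convex.norm_image_sub_le_of_norm_hasDerivWithin_le
        (f := fun t : ℝ => |a + t| ^ q - q * (|a| ^ (q-2) * a) * t)
        (f' := fun t => q * G (a + t) - q * G a) (s := Set.uIcc 0 b)
      · intro t _
        have hc : HasDerivAt (fun t : ℝ => |a + t| ^ q) (q * G (a + t)) t := by
          have h := (hF' q hq (a + t)).comp t ((hasDerivAt_id t).const_add a)
          simp only [hGdef]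
          exact h.congr_deriv (by ring)
        have hl : HasDerivAt (fun t : ℝ => q * (|a| ^ (q-2) * a) * t) (q * G a) t := by
          have h := (hasDerivAt_id t).const_mul (q * (|a| ^ (q-2) * a))
          simp only [hGdef]
          exact h.congr_deriv (by ring)
        exact (hc.sub hl).hasDerivWithinAt
      · intro t ht
        rw [Real.norm_eq_abs, show q * G (a + t) - q * G a = q * (G (a + t) - G a) by ring,
          abs_mul, abs_of_nonneg (by linarith : (0:ℝ) ≤ q)]
        exact mul_le_mul_of_nonneg_left (stepA t ht) (by linarith)
      · exact convex_uIcc _ _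
      · exact Set.left_mem_uIcc
      · exact Set.right_mem_uIcc
    simp only [Real.norm_eq_abs, sub_zero, add_zero, mul_zero] at key
    calc |(|a + b| ^ q - |a| ^ q - q * |a| ^ (q - 2) * a * b)|
        = |(|a + b| ^ q - q * (|a| ^ (q-2) * a) * b) - |a| ^ q| := by ring_nf
      _ ≤ q * ((q-1) * M ^ (q-2) * |b|) * |b| := key
  -- Step C: bound M^{q-2}
  have hbsq : |b| * |b| = b ^ 2 := by rw [← abs_mul, ← sq, abs_of_nonneg (sq_nonneg b)]
  have stepC : M ^ (q-2) ≤ 2 ^ (q-2) * (|a| ^ (q-2) + |b| ^ (q-2)) := by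
    have hm : M ≤ 2 * max |a| |b| := by
      rcases le_total |a| |b| with h | h
      · rw [max_eq_right h]; simp only [hM]; linarith
      · rw [max_eq_left h]; simp only [hM]; linarith
    calc M ^ (q-2) ≤ (2 * max |a| |b|) ^ (q-2) :=
          Real.rpow_le_rpow hM0 hm (by linarith)
      _ = 2 ^ (q-2) * (max |a| |b|) ^ (q-2) :=
          Real.mul_rpow (by norm_num) (le_max_of_le_left (abs_nonneg a))
      _ ≤ 2 ^ (q-2) * (|a| ^ (q-2) + |b| ^ (q-2)) := by
          apply mul_le_mul_of_nonneg_left _ (le_of_lt h2)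
          rcases le_total |a| |b| with h | h
          · rw [max_eq_right h]
            have := Real.rpow_nonneg (abs_nonneg a) (q-2); linarith
          · rw [max_eq_left h]
            have := Real.rpow_nonneg (abs_nonneg b) (q-2); linarith
  have hbq : |b| ^ (q-2) * b ^ 2 = |b| ^ q := by
    rw [← sq_abs b, ← Real.rpow_natCast |b| 2,
      ← Real.rpow_add_of_nonneg (abs_nonneg b) (by linarith) (by norm_num)]
    norm_num
  calc |(|a + b| ^ q - |a| ^ q - q * |a| ^ (q - 2) * a * b)|
      ≤ q * ((q-1) * M ^ (q-2) * |b|) * |b| := stepB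
    _ = q * (q-1) * M ^ (q-2) * b ^ 2 := by rw [← hbsq]; ring
    _ ≤ q * (q-1) * (2 ^ (q-2) * (|a| ^ (q-2) + |b| ^ (q-2))) * b ^ 2 := by
        apply mul_le_mul_of_nonneg_right _ (sq_nonneg b)
        apply mul_le_mul_of_nonneg_left stepC
        nlinarith
    _ = q * (q-1) * 2 ^ (q-2) * (|a| ^ (q-2) * b ^ 2 + |b| ^ (q-2) * b ^ 2) := by ring
    _ = q * (q-1) * 2 ^ (q-2) * (|a| ^ (q-2) * b ^ 2 + |b| ^ q) := by rw [hbq]
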